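/- A Frank-and-Wolfe set has no flat asymptotes: if M is an affine subspace with dist(F, M) = 0, then F ∩ M ≠ ∅. -/

import Mathlib

open Pointwise

noncomputable section

/-- A quadratic function on a real vector space. -/
def IsQuadratic {E : Type*} [AddCommGroup E] [Module ℝ E] (f : E → ℝ) : Prop :=
  ∃ (B : E →ₗ[ℝ] E →ₗ[ℝ] ℝ) (l : E →ₗ[ℝ] ℝ) (c : ℝ), ∀ x, f x = B x x + l x + c

/-- A Frank-and-Wolfe set: every quadratic function bounded below on `F`
attains its infimum on `F`. -/
def IsFWSet {E : Type*} [AddCommGroup E] [Module ℝ E] (F : Set E) : Prop :=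
  ∀ f : E → ℝ, IsQuadratic f → BddBelow (f '' F) →
    ∃ x₀ ∈ F, ∀ x ∈ F, f x₀ ≤ f x

theorem FW_no_f_asymptote {n : ℕ} (F : Set (EuclideanSpace ℝ (Fin n)))
    (hF : IsFWSet F) (M : AffineSubspace ℝ (EuclideanSpace ℝ (Fin n)))
    (hdist : ∀ ε : ℝ, 0 < ε → ∃ x ∈ F, ∃ y ∈ (M : Set (EuclideanSpace ℝ (Fin n))), dist x y < ε) :
    (F ∩ (M : Set (EuclideanSpace ℝ (Fin n)))).Nonempty := by
  obtain ⟨_, _, p, hp, _⟩ := hdist 1 one_pos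
  set V := M.direction
  -- the projection onto Vᗮ as a linear map
  set g : EuclideanSpace ℝ (Fin n) →ₗ[ℝ] EuclideanSpace ℝ (Fin n) :=
    (Vᗮ.subtype.comp (Submodule.orthogonalProjection Vᗮ).toLinearMap)
  have hg : ∀ x, g x = (Submodule.orthogonalProjection Vᗮ x : EuclideanSpace ℝ (Fin n)) := fun x => rfl
  set f : EuclideanSpace ℝ (Fin n) → ℝ := fun x => ‖g (x - p)‖ ^ 2 with hf
  -- f is quadratic
  have hquad : IsQuadratic f := by
    refine ⟨((innerₗ (EuclideanSpace ℝ (Fin n))).comp g).compl₂ g,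
      -(((innerₗ (EuclideanSpace ℝ (Fin n))).comp g).flip (2 • g p)), ‖g p‖ ^ 2, ?_⟩
    intro x
    simp only [LinearMap.compl₂_apply, LinearMap.comp_apply, LinearMap.neg_apply,
      LinearMap.flip_apply, innerₗ_apply_apply, hf]
    rw [map_sub, ← real_inner_self_eq_norm_sq, ← real_inner_self_eq_norm_sq]
    simp only [inner_sub_left, inner_sub_right, two_smul, inner_add_left, inner_add_right]
    rw [real_inner_comm (g p) (g x)]
    ring
  -- key bound: f x ≤ dist x y ^ 2 for y ∈ M
  have hbound : ∀ x, ∀ y ∈ (M : Set (EuclideanSpace ℝ (Fin n))), f x ≤ dist x y ^ 2 := by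
    intro x y hy
    have hyp : y - p ∈ Vᗮᗮ := Submodule.le_orthogonal_orthogonal V (M.vsub_mem_direction hy hp)
    have h1 : g (x - p) = g (x - y) := by
      have : g (y - p) = 0 := by
        rw [hg, Submodule.orthogonalProjectionOnto_apply_of_mem_orthogonal hyp]
        simp
      have h2 : x - p = (x - y) + (y - p) := by abel
      rw [h2, map_add, this, add_zero]
    rw [hf]
    simp only [h1]
    rw [dist_eq_norm]
    have : ‖g (x - y)‖ ≤ ‖x - y‖ := by
      rw [hg]
      have := Submodule.orthogonalProjection_norm_le Vᗮ
      calc ‖(Submodule.orthogonalProjection Vᗮ (x - y) : EuclideanSpace ℝ (Fin n))‖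
          = ‖Submodule.orthogonalProjection Vᗮ (x - y)‖ := rfl
        _ ≤ ‖Submodule.orthogonalProjection Vᗮ‖ * ‖x - y‖ := (Submodule.orthogonalProjection Vᗮ).le_opNorm _
        _ ≤ 1 * ‖x - y‖ := by gcongr
        _ = ‖x - y‖ := one_mul _
    exact pow_le_pow_left₀ (norm_nonneg _) this 2
  have hbdd : BddBelow (f '' F) := by
    refine ⟨0, ?_⟩
    rintro _ ⟨x, _, rfl⟩
    positivity
  obtain ⟨x₀, hx₀F, hmin⟩ := hF f hquad hbdd
  -- f x₀ = 0
  have h0 : ‖g (x₀ - p)‖ = 0 := by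
    by_contra h
    have hpos : 0 < ‖g (x₀ - p)‖ := lt_of_le_of_ne (norm_nonneg _) (Ne.symm h)
    obtain ⟨x, hxF, y, hyM, hxy⟩ := hdist ‖g (x₀ - p)‖ hpos
    have h1 := hmin x hxF
    have h2 := hbound x y hyM
    have h3 : ‖g (x₀ - p)‖ ^ 2 ≤ dist x y ^ 2 := le_trans h1 h2
    nlinarith [dist_nonneg (x := x) (y := y)]
  -- conclude x₀ ∈ M
  have hmem : x₀ - p ∈ V := by
    have h1 : g (x₀ - p) = 0 := norm_eq_zero.mp h0
    have h2 : (x₀ - p) - g (x₀ - p) ∈ Vᗮᗮ := Submodule.sub_starProjection_mem_orthogonal (K := Vᗮ) _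
    rw [h1, sub_zero, Submodule.orthogonal_orthogonal] at h2
    exact h2
  exact ⟨x₀, hx₀F, (AffineSubspace.vsub_right_mem_direction_iff_mem hp x₀).mp hmem⟩
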